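/- Fix 0<q<1 and α>−1. Then Σ_{j=0}^{∞} π̃_j^{(α)} = ∞, i.e. the partial sums Σ_{j=0}^{n} π̃_j^{(α)} tend to +∞ as n→∞. -/

import Mathlib

open Finset

/-- The finite q-Pochhammer symbol `(a;q)_n = ∏_{k=0}^{n−1} (1 − a q^k)`. -/
noncomputable def qPochN (q a : ℝ) (n : ℕ) : ℝ :=
  ∏ k ∈ Finset.range n, (1 - a * q ^ k)

/-- The infinite q-Pochhammer symbol `(a;q)_∞ = ∏_{k=0}^∞ (1 − a q^k)`. -/
noncomputable def qPochInf (q a : ℝ) : ℝ :=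
  ∏' k : ℕ, (1 - a * q ^ k)

/-- `γ(u,v;q) = (q^u;q)_∞/(q^{u+v};q)_∞`. -/
noncomputable def qgamma (q u v : ℝ) : ℝ :=
  qPochInf q (q ^ u) / qPochInf q (q ^ (u + v))

/-- `r_n^{(α)} = (1−γ(n+1,α+1;q))/(1−γ(n,α+1;q))`. -/
noncomputable def rQL (q α : ℝ) (n : ℕ) : ℝ :=
  (1 - qgamma q ((n : ℝ) + 1) (α + 1)) / (1 - qgamma q (n : ℝ) (α + 1))

/-- The birth rates `λ̃_n^{(α)} = q^{−2n−α−1}(1−q^{n+α+1})/r_n^{(α)}`. -/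
noncomputable def lamQL (q α : ℝ) (n : ℕ) : ℝ :=
  q ^ (-(2 * (n : ℝ)) - α - 1) * (1 - q ^ ((n : ℝ) + α + 1)) / rQL q α n

/-- The death rates `μ̃_n^{(α)} = q^{−2n−α}(1−q^n) r_n^{(α)}`. -/
noncomputable def muQL (q α : ℝ) (n : ℕ) : ℝ :=
  q ^ (-(2 * (n : ℝ)) - α) * (1 - q ^ (n : ℝ)) * rQL q α n

/-- `π̃_n^{(α)} = ∏_{k=0}^{n−1} λ̃_k^{(α)}/μ̃_{k+1}^{(α)}` (with `π̃_0 = 1`). -/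
noncomputable def piQL (q α : ℝ) (n : ℕ) : ℝ :=
  ∏ k ∈ Finset.range n, lamQL q α k / muQL q α (k + 1)

/-- `T̃_k^{(α)} = Σ_{j=0}^{k} π̃_j^{(α)}`. -/
noncomputable def TQL (q α : ℝ) (k : ℕ) : ℝ :=
  ∑ j ∈ Finset.range (k + 1), piQL q α j

/-- The descending q-Pochhammer symbol `(q^k;q^{−1})_ℓ = ∏_{i=0}^{ℓ−1}(1−q^{k−i})`. -/
noncomputable def qPochDesc (q : ℝ) (k ℓ : ℕ) : ℝ :=
  ∏ i ∈ Finset.range ℓ, (1 - q ^ ((k : ℝ) - (i : ℝ)))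

open Filter Real Topology

lemma aux_weier (x : ℕ → ℝ) (h0 : ∀ k, 0 ≤ x k) (h1 : ∀ k, x k ≤ 1) (n : ℕ) :
    1 - ∑ k ∈ range n, x k ≤ ∏ k ∈ range n, (1 - x k) := by
  induction n with
  | zero => simp
  | succ n ih =>
    rw [Finset.prod_range_succ, Finset.sum_range_succ]
    have h2 : 0 ≤ 1 - x n := by linarith [h1 n]
    have h3 : 0 ≤ ∑ k ∈ range n, x k := Finset.sum_nonneg fun k _ => h0 k
    nlinarith [mul_nonneg (sub_nonneg.2 ih) h2, mul_nonneg h3 (h0 n)]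

section
variable {q a : ℝ} (hq0 : 0 < q) (hq1 : q < 1) (ha0 : 0 ≤ a) (ha1 : a < 1)
include hq0 hq1 ha0 ha1

lemma aux_factor_pos (k : ℕ) : 0 < 1 - a * q ^ k := by
  have h1 : q ^ k ≤ 1 := pow_le_one₀ hq0.le hq1.le
  have h2 : 0 ≤ q ^ k := pow_nonneg hq0.le k
  nlinarith

lemma aux_summable_log : Summable fun k => Real.log (1 - a * q ^ k) := by
  apply Summable.of_norm_bounded (g := fun k => a / (1 - a) * q ^ k)
    (((summable_geometric_of_lt_one hq0.le hq1)).mul_left _)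
  intro k
  have hp := aux_factor_pos hq0 hq1 ha0 ha1 k
  have h1 : q ^ k ≤ 1 := pow_le_one₀ hq0.le hq1.le
  have h2 : 0 ≤ q ^ k := pow_nonneg hq0.le k
  have hx1 : a * q ^ k ≤ a := by nlinarith
  have hlogle : Real.log (1 - a * q ^ k) ≤ 0 :=
    Real.log_nonpos (by linarith) (by nlinarith)
  rw [Real.norm_eq_abs, abs_of_nonpos hlogle]
  have h4 : -Real.log (1 - a * q ^ k) = Real.log (1 - a * q ^ k)⁻¹ := (Real.log_inv _).symm
  rw [h4]
  have hle := Real.log_le_sub_one_of_pos (inv_pos.2 hp)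
  have hbound : (1 - a * q ^ k)⁻¹ - 1 ≤ a / (1 - a) * q ^ k := by
    have e1 : (1 - a * q ^ k)⁻¹ - 1 = a * q ^ k / (1 - a * q ^ k) := by field_simp; ring
    have e2 : a / (1 - a) * q ^ k = a * q ^ k / (1 - a) := by ring
    rw [e1, e2]
    gcongr
    all_goals nlinarith
  linarith

lemma aux_hasProd :
    HasProd (fun k => 1 - a * q ^ k)
      (Real.exp (∑' k, Real.log (1 - a * q ^ k))) := by
  have h := ((aux_summable_log hq0 hq1 ha0 ha1).hasSum).rexp
  convert h using 2 with k
  exact (Real.exp_log (aux_factor_pos hq0 hq1 ha0 ha1 k)).symm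

lemma aux_multipliable : Multipliable (fun k => 1 - a * q ^ k) :=
  ⟨_, aux_hasProd hq0 hq1 ha0 ha1⟩

lemma aux_pos : 0 < qPochInf q a := by
  rw [qPochInf, (aux_hasProd hq0 hq1 ha0 ha1).tprod_eq]
  exact Real.exp_pos _

lemma aux_tendsto :
    Tendsto (fun n => ∏ k ∈ range n, (1 - a * q ^ k)) atTop (𝓝 (qPochInf q a)) :=
  (aux_multipliable hq0 hq1 ha0 ha1).hasProd.tendsto_prod_nat

lemma aux_le_partial (n : ℕ) : qPochInf q a ≤ ∏ k ∈ range n, (1 - a * q ^ k) := by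
  refine le_of_tendsto (aux_tendsto hq0 hq1 ha0 ha1) ?_
  filter_upwards [eventually_ge_atTop n] with m hm
  rw [← Finset.prod_range_mul_prod_Ico _ hm]
  have hP : 0 < ∏ k ∈ range n, (1 - a * q ^ k) :=
    Finset.prod_pos fun k _ => aux_factor_pos hq0 hq1 ha0 ha1 k
  have hI : ∏ k ∈ Finset.Ico n m, (1 - a * q ^ k) ≤ 1 := by
    apply Finset.prod_le_one
    · exact fun k _ => (aux_factor_pos hq0 hq1 ha0 ha1 k).le
    · intro k _
      have h2 : 0 ≤ q ^ k := pow_nonneg hq0.le k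
      nlinarith [mul_nonneg ha0 h2]
  nlinarith

lemma aux_le_one : qPochInf q a ≤ 1 := by
  simpa using aux_le_partial hq0 hq1 ha0 ha1 0

lemma aux_lower : 1 - a / (1 - q) ≤ qPochInf q a := by
  refine ge_of_tendsto (aux_tendsto hq0 hq1 ha0 ha1) ?_
  filter_upwards with n
  have hw : 1 - ∑ k ∈ range n, a * q ^ k ≤ ∏ k ∈ range n, (1 - a * q ^ k) := by
    apply aux_weier
    · exact fun k => mul_nonneg ha0 (pow_nonneg hq0.le k)
    · intro k
      have h1 : q ^ k ≤ 1 := pow_le_one₀ hq0.le hq1.le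
      have h2 : 0 ≤ q ^ k := pow_nonneg hq0.le k
      nlinarith
  have hg : ∑ k ∈ range n, a * q ^ k ≤ a / (1 - q) := by
    rw [← Finset.mul_sum]
    have hs : ∑ k ∈ range n, q ^ k ≤ (1 - q)⁻¹ := by
      refine le_trans (Summable.sum_le_tsum (range n) (fun k _ => pow_nonneg hq0.le k)
        (summable_geometric_of_lt_one hq0.le hq1)) ?_
      rw [tsum_geometric_of_lt_one hq0.le hq1]
    rw [div_eq_mul_inv]
    exact mul_le_mul_of_nonneg_left hs ha0
  linarith

end

section
variable {q b c : ℝ} (hq0 : 0 < q) (hq1 : q < 1) (hb : 0 ≤ b) (hbc : b ≤ c) (hc1 : c < 1)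
include hq0 hq1 hb hbc hc1

lemma aux_ratio : qPochInf q c ≤ (1 - c) / (1 - b) * qPochInf q b := by
  have hb1 : b < 1 := lt_of_le_of_lt hbc hc1
  have hc0 : 0 ≤ c := le_trans hb hbc
  refine le_of_tendsto_of_tendsto (aux_tendsto hq0 hq1 hc0 hc1)
    ((aux_tendsto hq0 hq1 hb hb1).const_mul ((1 - c) / (1 - b))) ?_
  filter_upwards [eventually_ge_atTop 1] with n hn
  obtain ⟨m, rfl⟩ : ∃ m, n = m + 1 := ⟨n - 1, by omega⟩
  show ∏ k ∈ range (m + 1), (1 - c * q ^ k) ≤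
      (1 - c) / (1 - b) * ∏ k ∈ range (m + 1), (1 - b * q ^ k)
  rw [Finset.prod_range_succ', Finset.prod_range_succ']
  have key : ∏ k ∈ range m, (1 - c * q ^ (k + 1)) ≤ ∏ k ∈ range m, (1 - b * q ^ (k + 1)) := by
    apply Finset.prod_le_prod
    · intro k _
      have := aux_factor_pos hq0 hq1 hc0 hc1 (k + 1)
      linarith
    · intro k _
      have h2 : 0 ≤ q ^ (k + 1) := pow_nonneg hq0.le _
      nlinarith
  have hcpos : (0:ℝ) ≤ 1 - c := by linarith
  have hbne : (1:ℝ) - b ≠ 0 := by linarith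
  have e : (1 - c) / (1 - b) * ((∏ k ∈ range m, (1 - b * q ^ (k + 1))) * (1 - b * q ^ 0)) =
      (1 - c) * ∏ k ∈ range m, (1 - b * q ^ (k + 1)) := by
    field_simp
  rw [e]
  simp only [pow_zero, mul_one]
  nlinarith [Finset.prod_nonneg (fun k (_ : k ∈ range m) =>
    (aux_factor_pos hq0 hq1 hc0 hc1 (k + 1)).le)]
end

section QL
variable {q α : ℝ} (hq0 : 0 < q) (hq1 : q < 1) (hα : -1 < α)
include hq0 hq1 hα

lemma qgamma_le_ratio (n : ℕ) (hn : 1 ≤ n) :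
    qgamma q (n : ℝ) (α + 1) ≤ (1 - q ^ (n : ℝ)) / (1 - q ^ ((n : ℝ) + (α + 1))) := by
  have hb0 : (0:ℝ) ≤ q ^ ((n : ℝ) + (α + 1)) := (Real.rpow_pos_of_pos hq0 _).le
  have hbc : q ^ ((n : ℝ) + (α + 1)) ≤ q ^ (n : ℝ) :=
    Real.rpow_le_rpow_of_exponent_ge hq0 hq1.le (by linarith)
  have hc1 : q ^ (n : ℝ) < 1 := Real.rpow_lt_one hq0.le hq1 (by exact_mod_cast hn)
  have hb1 : q ^ ((n : ℝ) + (α + 1)) < 1 := lt_of_le_of_lt hbc hc1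
  have hPb : 0 < qPochInf q (q ^ ((n : ℝ) + (α + 1))) := aux_pos hq0 hq1 hb0 hb1
  rw [qgamma, div_le_div_iff₀ hPb (by linarith : (0:ℝ) < 1 - q ^ ((n:ℝ) + (α+1)))]
  have h := aux_ratio hq0 hq1 hb0 hbc hc1
  have e : (1 - q ^ (n:ℝ)) / (1 - q ^ ((n:ℝ) + (α+1))) * qPochInf q (q ^ ((n:ℝ) + (α+1)))
      * (1 - q ^ ((n:ℝ) + (α+1))) = (1 - q ^ (n:ℝ)) * qPochInf q (q ^ ((n:ℝ) + (α+1))) := by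
    field_simp
    rw [mul_div_assoc, div_self (by linarith : (1:ℝ) - q ^ ((n:ℝ) + (α+1)) ≠ 0), mul_one]
  nlinarith [mul_le_mul_of_nonneg_right h
    (by linarith : (0:ℝ) ≤ 1 - q ^ ((n:ℝ) + (α+1)))]

lemma one_sub_qgamma_pos (n : ℕ) (hn : 1 ≤ n) :
    0 < 1 - qgamma q (n : ℝ) (α + 1) := by
  have h := qgamma_le_ratio hq0 hq1 hα n hn
  have hc1 : q ^ (n : ℝ) < 1 := Real.rpow_lt_one hq0.le hq1 (by exact_mod_cast hn)
  have hbc : q ^ ((n : ℝ) + (α + 1)) < q ^ (n : ℝ) :=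
    Real.rpow_lt_rpow_of_exponent_gt hq0 hq1 (by linarith)
  have hratio : (1 - q ^ (n : ℝ)) / (1 - q ^ ((n : ℝ) + (α + 1))) < 1 := by
    rw [div_lt_one (by linarith)]
    linarith
  linarith

lemma one_sub_qgamma_le (n : ℕ) (hn : 1 ≤ n) :
    1 - qgamma q (n : ℝ) (α + 1) ≤ q ^ (n : ℝ) / (1 - q) := by
  have hc0 : (0:ℝ) ≤ q ^ (n : ℝ) := (Real.rpow_pos_of_pos hq0 _).le
  have hc1 : q ^ (n : ℝ) < 1 := Real.rpow_lt_one hq0.le hq1 (by exact_mod_cast hn)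
  have hb0 : (0:ℝ) ≤ q ^ ((n : ℝ) + (α + 1)) := (Real.rpow_pos_of_pos hq0 _).le
  have hb1 : q ^ ((n : ℝ) + (α + 1)) < 1 :=
    Real.rpow_lt_one hq0.le hq1 (by
      have hn' : (1:ℝ) ≤ (n:ℝ) := by exact_mod_cast hn
      linarith)
  have hPc : 0 < qPochInf q (q ^ (n : ℝ)) := aux_pos hq0 hq1 hc0 hc1
  have hPb : 0 < qPochInf q (q ^ ((n : ℝ) + (α + 1))) := aux_pos hq0 hq1 hb0 hb1
  have hPb1 : qPochInf q (q ^ ((n : ℝ) + (α + 1))) ≤ 1 := aux_le_one hq0 hq1 hb0 hb1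
  have h1 : qPochInf q (q ^ (n : ℝ)) ≤ qgamma q (n : ℝ) (α + 1) := by
    rw [qgamma, le_div_iff₀ hPb]
    nlinarith
  have h2 : 1 - q ^ (n : ℝ) / (1 - q) ≤ qPochInf q (q ^ (n : ℝ)) :=
    aux_lower hq0 hq1 hc0 hc1
  linarith

lemma qgamma_zero : qgamma q (0 : ℝ) (α + 1) = 0 := by
  have h1 : qPochInf q (q ^ (0 : ℝ)) = 0 := by
    rw [Real.rpow_zero]
    have hev : ∀ᶠ s : Finset ℕ in atTop, ∏ i ∈ s, (1 - 1 * q ^ i) = (0:ℝ) := by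
      filter_upwards [eventually_ge_atTop ({0} : Finset ℕ)] with s hs
      apply Finset.prod_eq_zero (hs (Finset.mem_singleton_self 0))
      simp
    have hzero : HasProd (fun k : ℕ => 1 - 1 * q ^ k) 0 :=
      (tendsto_congr' hev).mpr tendsto_const_nhds
    rw [qPochInf, hzero.tprod_eq]
  rw [qgamma, h1, zero_div]

lemma one_sub_qgamma_pos' (n : ℕ) : 0 < 1 - qgamma q (n : ℝ) (α + 1) := by
  rcases Nat.eq_zero_or_pos n with h | h
  · subst h
    rw [Nat.cast_zero, qgamma_zero hq0 hq1 hα]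
    norm_num
  · exact one_sub_qgamma_pos hq0 hq1 hα n h

lemma rQL_pos (n : ℕ) : 0 < rQL q α n := by
  have h1 := one_sub_qgamma_pos' hq0 hq1 hα (n + 1)
  have h0 := one_sub_qgamma_pos' hq0 hq1 hα n
  push_cast at h1
  exact div_pos h1 h0

lemma aux_one_sub_rpow_pos {u : ℝ} (hu : 0 < u) : 0 < 1 - q ^ u := by
  have := Real.rpow_lt_one hq0.le hq1 hu
  linarith

set_option maxHeartbeats 1000000 in
lemma piQL_closed (n : ℕ) :
    piQL q α n = q ^ (n : ℝ) * (∏ k ∈ Finset.range n, (1 - q ^ ((k : ℝ) + α + 1)))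
      * (1 - qgamma q (1 : ℝ) (α + 1)) /
      ((∏ k ∈ Finset.range n, (1 - q ^ ((k : ℝ) + 1)))
        * (1 - qgamma q (n : ℝ) (α + 1)) * (1 - qgamma q ((n : ℝ) + 1) (α + 1))) := by
  induction n with
  | zero =>
    simp only [Nat.cast_zero, Finset.range_zero, Finset.prod_empty, piQL, Real.rpow_zero,
      qgamma_zero hq0 hq1 hα, zero_add]
    norm_num
    have h1 := (one_sub_qgamma_pos' hq0 hq1 hα 1).ne'
    rw [Nat.cast_one] at h1
    rw [div_self h1]
  | succ n ih =>
    have hstep : piQL q α (n + 1) = piQL q α n * (lamQL q α n / muQL q α (n + 1)) := by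
      rw [piQL, Finset.prod_range_succ, ← piQL]
    have hg0 := (one_sub_qgamma_pos' hq0 hq1 hα n).ne'
    have hg1 := (one_sub_qgamma_pos' hq0 hq1 hα (n + 1)).ne'
    have hg2 := (one_sub_qgamma_pos' hq0 hq1 hα (n + 2)).ne'
    push_cast at hg1 hg2
    have hg2' : 1 - qgamma q ((n : ℝ) + 1 + 1) (α + 1) ≠ 0 := by
      rw [show ((n : ℝ) + 1 + 1) = (n : ℝ) + 2 by ring]; exact hg2
    have hB : (0:ℝ) < ∏ k ∈ Finset.range n, (1 - q ^ ((k : ℝ) + 1)) :=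
      Finset.prod_pos fun k _ => aux_one_sub_rpow_pos hq0 hq1 hα (by positivity)
    have hBn : (0:ℝ) < 1 - q ^ ((n : ℝ) + 1) :=
      aux_one_sub_rpow_pos hq0 hq1 hα (by positivity)
    have hAn : (0:ℝ) < 1 - q ^ ((n : ℝ) + α + 1) := by
      refine aux_one_sub_rpow_pos hq0 hq1 hα ?_
      have : (0:ℝ) ≤ (n:ℝ) := Nat.cast_nonneg n
      linarith
    have hpow : q ^ (-(2 * (n : ℝ)) - α - 1) = q * q ^ (-(2 * ((n : ℝ) + 1)) - α) := by
      rw [show (-(2 * (n : ℝ)) - α - 1) = 1 + (-(2 * ((n : ℝ) + 1)) - α) by ring,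
        Real.rpow_add hq0, Real.rpow_one]
    have hE : (0:ℝ) < q ^ (-(2 * ((n : ℝ) + 1)) - α) := Real.rpow_pos_of_pos hq0 _
    have hqn1 : q ^ ((n : ℝ) + 1) = q ^ (n : ℝ) * q := by
      rw [Real.rpow_add hq0, Real.rpow_one]
    have hratio : lamQL q α n / muQL q α (n + 1) =
        q * (1 - q ^ ((n : ℝ) + α + 1)) * (1 - qgamma q (n : ℝ) (α + 1)) /
          ((1 - q ^ ((n : ℝ) + 1)) * (1 - qgamma q ((n : ℝ) + 1 + 1) (α + 1))) := by
      rw [lamQL, muQL, rQL, rQL]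
      push_cast
      rw [hpow]
      field_simp
    have hD1 : (∏ k ∈ Finset.range n, (1 - q ^ ((k : ℝ) + 1))) * (1 - qgamma q (n : ℝ) (α + 1))
        * (1 - qgamma q ((n : ℝ) + 1) (α + 1)) *
        ((1 - q ^ ((n : ℝ) + 1)) * (1 - qgamma q ((n : ℝ) + 1 + 1) (α + 1))) ≠ 0 := by
      apply mul_ne_zero (mul_ne_zero (mul_ne_zero hB.ne' hg0) hg1)
        (mul_ne_zero hBn.ne' hg2')
    have hD2 : (∏ k ∈ Finset.range (n + 1), (1 - q ^ ((k : ℝ) + 1)))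
        * (1 - qgamma q ((n:ℝ) + 1) (α + 1)) * (1 - qgamma q ((n : ℝ) + 1 + 1) (α + 1)) ≠ 0 := by
      rw [Finset.prod_range_succ]
      exact mul_ne_zero (mul_ne_zero (mul_ne_zero hB.ne' hBn.ne') hg1) hg2'
    rw [hstep, ih, hratio, div_mul_div_comm]
    push_cast
    rw [show ((n:ℝ) + 1 + 1) = (n:ℝ) + 1 + 1 by ring]
    rw [div_eq_div_iff hD1 hD2]
    rw [Finset.prod_range_succ, Finset.prod_range_succ,
      show q ^ ((n:ℝ) + 1) = q ^ (n:ℝ) * q from hqn1]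
    ring

lemma one_sub_qgamma_le' (n : ℕ) :
    1 - qgamma q (n : ℝ) (α + 1) ≤ q ^ (n : ℝ) / (1 - q) := by
  rcases Nat.eq_zero_or_pos n with h | h
  · subst h
    rw [Nat.cast_zero, qgamma_zero hq0 hq1 hα, Real.rpow_zero, sub_zero,
      le_div_iff₀ (by linarith : (0:ℝ) < 1 - q)]
    nlinarith
  · exact one_sub_qgamma_le hq0 hq1 hα n h

lemma piQL_lower (n : ℕ) :
    qPochInf q (q ^ (α + 1)) * (1 - qgamma q 1 (α + 1)) * (1 - q) ^ 2 ≤ piQL q α n := by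
  have h1q : (0:ℝ) < 1 - q := by linarith
  have hg1 : 0 < 1 - qgamma q (1:ℝ) (α + 1) := by
    have := one_sub_qgamma_pos' hq0 hq1 hα 1
    rwa [Nat.cast_one] at this
  have ha1pos : (0:ℝ) < q ^ (α + 1) := Real.rpow_pos_of_pos hq0 _
  have ha1lt : q ^ (α + 1) < 1 := Real.rpow_lt_one hq0.le hq1 (by linarith)
  have hPA : 0 < qPochInf q (q ^ (α + 1)) := aux_pos hq0 hq1 ha1pos.le ha1lt
  have hApA : qPochInf q (q ^ (α + 1)) ≤ ∏ k ∈ Finset.range n, (1 - q ^ ((k : ℝ) + α + 1)) := by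
    have h := aux_le_partial hq0 hq1 ha1pos.le ha1lt n
    have e : ∏ k ∈ Finset.range n, (1 - q ^ (α + 1) * q ^ k)
        = ∏ k ∈ Finset.range n, (1 - q ^ ((k : ℝ) + α + 1)) := by
      refine Finset.prod_congr rfl fun k _ => ?_
      rw [← Real.rpow_natCast q k, ← Real.rpow_add hq0]
      congr 1
      ring
    rwa [e] at h
  have hA : (0:ℝ) < ∏ k ∈ Finset.range n, (1 - q ^ ((k : ℝ) + α + 1)) := lt_of_lt_of_le hPA hApA
  have hBpos : (0:ℝ) < ∏ k ∈ Finset.range n, (1 - q ^ ((k : ℝ) + 1)) :=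
    Finset.prod_pos fun k _ => aux_one_sub_rpow_pos hq0 hq1 hα (by positivity)
  have hB1 : ∏ k ∈ Finset.range n, (1 - q ^ ((k : ℝ) + 1)) ≤ 1 := by
    apply Finset.prod_le_one
    · exact fun k _ => (aux_one_sub_rpow_pos hq0 hq1 hα (by positivity)).le
    · intro k _
      have := Real.rpow_pos_of_pos hq0 ((k : ℝ) + 1)
      linarith
  have hgnpos := one_sub_qgamma_pos' hq0 hq1 hα n
  have hgn1pos := one_sub_qgamma_pos' hq0 hq1 hα (n + 1)
  push_cast at hgn1pos
  have hgn := one_sub_qgamma_le' hq0 hq1 hα n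
  have hgn1 := one_sub_qgamma_le' hq0 hq1 hα (n + 1)
  push_cast at hgn1
  have hXpos : (0:ℝ) < q ^ (n : ℝ) := Real.rpow_pos_of_pos hq0 _
  have hYpos : (0:ℝ) < q ^ ((n : ℝ) + 1) := Real.rpow_pos_of_pos hq0 _
  have hYle : q ^ ((n : ℝ) + 1) ≤ 1 := Real.rpow_le_one hq0.le hq1.le (by positivity)
  rw [piQL_closed hq0 hq1 hα n,
    le_div_iff₀ (by positivity : (0:ℝ) < (∏ k ∈ Finset.range n, (1 - q ^ ((k : ℝ) + 1)))
      * (1 - qgamma q (n : ℝ) (α + 1)) * (1 - qgamma q ((n : ℝ) + 1) (α + 1)))]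
  have step1 : (∏ k ∈ Finset.range n, (1 - q ^ ((k : ℝ) + 1)))
      * (1 - qgamma q (n : ℝ) (α + 1)) * (1 - qgamma q ((n : ℝ) + 1) (α + 1))
      ≤ 1 * (q ^ (n : ℝ) / (1 - q)) * (q ^ ((n : ℝ) + 1) / (1 - q)) :=
    mul_le_mul (mul_le_mul hB1 hgn hgnpos.le zero_le_one) hgn1 hgn1pos.le (by positivity)
  have step2 : qPochInf q (q ^ (α + 1)) * (1 - qgamma q 1 (α + 1)) * (1 - q) ^ 2 *
      (1 * (q ^ (n : ℝ) / (1 - q)) * (q ^ ((n : ℝ) + 1) / (1 - q)))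
      = qPochInf q (q ^ (α + 1)) * (1 - qgamma q 1 (α + 1))
        * (q ^ (n : ℝ) * q ^ ((n : ℝ) + 1)) := by
    field_simp
  have step3 : qPochInf q (q ^ (α + 1)) * (1 - qgamma q 1 (α + 1))
      * (q ^ (n : ℝ) * q ^ ((n : ℝ) + 1))
      ≤ (∏ k ∈ Finset.range n, (1 - q ^ ((k : ℝ) + α + 1))) * (1 - qgamma q 1 (α + 1))
        * (q ^ (n : ℝ) * 1) := by
    have := mul_le_mul hApA hYle hYpos.le hA.le
    nlinarith [mul_le_mul hApA hYle hYpos.le hA.le, mul_pos hXpos hg1]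
  have hmono := mul_le_mul_of_nonneg_left step1
    (by positivity : (0:ℝ) ≤ qPochInf q (q ^ (α + 1)) * (1 - qgamma q 1 (α + 1)) * (1 - q) ^ 2)
  calc qPochInf q (q ^ (α + 1)) * (1 - qgamma q 1 (α + 1)) * (1 - q) ^ 2 *
        ((∏ k ∈ Finset.range n, (1 - q ^ ((k : ℝ) + 1)))
          * (1 - qgamma q (n : ℝ) (α + 1)) * (1 - qgamma q ((n : ℝ) + 1) (α + 1)))
      ≤ qPochInf q (q ^ (α + 1)) * (1 - qgamma q 1 (α + 1)) * (1 - q) ^ 2 *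
        (1 * (q ^ (n : ℝ) / (1 - q)) * (q ^ ((n : ℝ) + 1) / (1 - q))) := hmono
    _ = qPochInf q (q ^ (α + 1)) * (1 - qgamma q 1 (α + 1))
        * (q ^ (n : ℝ) * q ^ ((n : ℝ) + 1)) := step2
    _ ≤ (∏ k ∈ Finset.range n, (1 - q ^ ((k : ℝ) + α + 1))) * (1 - qgamma q 1 (α + 1))
        * (q ^ (n : ℝ) * 1) := step3
    _ = q ^ (n : ℝ) * (∏ k ∈ Finset.range n, (1 - q ^ ((k : ℝ) + α + 1)))
        * (1 - qgamma q 1 (α + 1)) := by ring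

end QL

open Filter in
/-- First claim in the proof of Theorem 6.11: `Σ_{j=0}^∞ π̃_j^{(α)} = ∞`, i.e. the
partial sums of the sequence `π̃_j^{(α)}` tend to `+∞`. -/
theorem modified_qLaguerre_pi_sum_diverges
    (q α : ℝ) (hq0 : 0 < q) (hq1 : q < 1) (hα : -1 < α) :
    Tendsto (fun n : ℕ => ∑ j ∈ Finset.range (n + 1), piQL q α j) atTop atTop := by
  have h1q : (0:ℝ) < 1 - q := by linarith
  have hg1 : 0 < 1 - qgamma q (1:ℝ) (α + 1) := by
    have := one_sub_qgamma_pos' hq0 hq1 hα 1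
    rwa [Nat.cast_one] at this
  have ha1pos : (0:ℝ) < q ^ (α + 1) := Real.rpow_pos_of_pos hq0 _
  have ha1lt : q ^ (α + 1) < 1 := Real.rpow_lt_one hq0.le hq1 (by linarith)
  have hPA : 0 < qPochInf q (q ^ (α + 1)) := aux_pos hq0 hq1 ha1pos.le ha1lt
  set c : ℝ := qPochInf q (q ^ (α + 1)) * (1 - qgamma q 1 (α + 1)) * (1 - q) ^ 2 with hc
  have hcpos : 0 < c := by positivity
  have hmono : Tendsto (fun n : ℕ => ((n : ℝ) + 1) * c) atTop atTop :=
    (tendsto_natCast_atTop_atTop.atTop_add tendsto_const_nhds).atTop_mul_const hcpos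
  apply tendsto_atTop_mono ?_ hmono
  intro n
  have hsum := Finset.card_nsmul_le_sum (Finset.range (n + 1)) (fun j => piQL q α j) c
    (fun j _ => piQL_lower hq0 hq1 hα j)
  rw [Finset.card_range, nsmul_eq_mul] at hsum
  push_cast at hsum
  exact hsum
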